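/- Lipschitz continuity of exponential attention weights in the query. Let V be a nonempty finite set, let k : V → ℝ^{d_out} be keys with ‖k_u‖ ≤ C for all u ∈ V, and for q ∈ ℝ^{d_out} define the weights w_u(q) := exp(⟨q, k_u⟩) / Σ_{w∈V} exp(⟨q, k_w⟩). Then for all q, q' ∈ ℝ^{d_out}: Σ_{u∈V} |w_u(q) − w_u(q')| ≤ 2 C ‖q − q'‖. -/

import Mathlib

open scoped BigOperators RealInnerProductSpace

private lemma two_mul_exp_sub_one_le (t : ℝ) (ht : 0 ≤ t) :
    2 * (Real.exp t - 1) ≤ t * (Real.exp t + 1) := by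
  set f : ℝ → ℝ := fun t => t * (Real.exp t + 1) - 2 * (Real.exp t - 1) with hf
  have hd : ∀ x : ℝ, HasDerivAt f (x * Real.exp x - Real.exp x + 1) x := by
    intro x
    have h1 : HasDerivAt (fun t : ℝ => t * (Real.exp t + 1))
        (1 * (Real.exp x + 1) + x * Real.exp x) x :=
      (hasDerivAt_id x).mul ((Real.hasDerivAt_exp x).add_const 1)
    have h2 : HasDerivAt (fun t : ℝ => 2 * (Real.exp t - 1)) (2 * Real.exp x) x :=
      ((Real.hasDerivAt_exp x).sub_const 1).const_mul 2
    have := h1.sub h2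
    exact this.congr_deriv (by ring)
  have hmono : MonotoneOn f (Set.Ici (0 : ℝ)) := by
    apply monotoneOn_of_deriv_nonneg (convex_Ici 0)
    · exact (Continuous.continuousOn (by fun_prop))
    · intro x _
      exact (hd x).differentiableAt.differentiableWithinAt
    · intro x hx
      rw [(hd x).deriv]
      have h := Real.add_one_le_exp (-x)
      have hex : (0:ℝ) < Real.exp x := Real.exp_pos x
      have : Real.exp x * (-x + 1) ≤ Real.exp x * Real.exp (-x) := by
        exact mul_le_mul_of_nonneg_left h hex.le
      rw [← Real.exp_add] at this
      simp at this
      nlinarith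
  have h0 : f 0 ≤ f t := hmono (Set.self_mem_Ici) ht ht
  simp only [hf, Real.exp_zero] at h0
  nlinarith [h0]

private lemma abs_exp_sub_exp_le (x y : ℝ) :
    |Real.exp x - Real.exp y| ≤ (Real.exp x + Real.exp y) / 2 * |x - y| := by
  have key : ∀ a b : ℝ, b ≤ a →
      Real.exp a - Real.exp b ≤ (Real.exp a + Real.exp b) / 2 * (a - b) := by
    intro a b hba
    have ht : 0 ≤ a - b := by linarith
    have h := two_mul_exp_sub_one_le (a - b) ht
    have heb : (0:ℝ) < Real.exp b := Real.exp_pos b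
    have hab : Real.exp a = Real.exp b * Real.exp (a - b) := by
      rw [← Real.exp_add]; ring_nf
    nlinarith [mul_le_mul_of_nonneg_left h heb.le]
  rcases le_total y x with h | h
  · rw [abs_of_nonneg (by nlinarith [Real.exp_le_exp.2 h] : (0:ℝ) ≤ Real.exp x - Real.exp y),
      abs_of_nonneg (by linarith : (0:ℝ) ≤ x - y)]
    exact key x y h
  · rw [abs_of_nonpos (by nlinarith [Real.exp_le_exp.2 h] : Real.exp x - Real.exp y ≤ 0),
      abs_of_nonpos (by linarith : x - y ≤ 0)]
    have := key y x h
    nlinarith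

/-- **Lipschitz continuity of exponential attention weights in the query.**
Let `k : V → ℝ^{d_out}` be keys with `‖k_u‖ ≤ C`, and for a query `q` let
`w_u(q) = exp(⟨q, k_u⟩) / ∑_w exp(⟨q, k_w⟩)` be the induced softmax weights. Then
`∑_u |w_u(q) − w_u(q')| ≤ 2 C ‖q − q'‖` for all queries `q, q'`. -/
theorem softmax_weights_lipschitz_in_query
    {V : Type*} [Fintype V] [Nonempty V] {dout : ℕ}
    (k : V → EuclideanSpace ℝ (Fin dout)) (C : ℝ) (hC : ∀ u : V, ‖k u‖ ≤ C)
    (q q' : EuclideanSpace ℝ (Fin dout)) :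
    ∑ u : V, |Real.exp ⟪q, k u⟫ / (∑ w : V, Real.exp ⟪q, k w⟫) -
        Real.exp ⟪q', k u⟫ / (∑ w : V, Real.exp ⟪q', k w⟫)| ≤
      2 * C * ‖q - q'‖ := by
  set a : V → ℝ := fun u => ⟪q, k u⟫ with ha
  set b : V → ℝ := fun u => ⟪q', k u⟫ with hb
  set A : ℝ := ∑ w : V, Real.exp (a w) with hA
  set B : ℝ := ∑ w : V, Real.exp (b w) with hB
  have hApos : 0 < A := Finset.sum_pos (fun w _ => Real.exp_pos _) Finset.univ_nonempty
  have hBpos : 0 < B := Finset.sum_pos (fun w _ => Real.exp_pos _) Finset.univ_nonempty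
  set r : ℝ := ‖q - q'‖ with hr
  have hr0 : 0 ≤ r := norm_nonneg _
  have hC0 : 0 ≤ C := le_trans (norm_nonneg (k (Classical.arbitrary V))) (hC _)
  -- pointwise bound on the inner-product differences
  have hdiff : ∀ u : V, |a u - b u| ≤ C * r := by
    intro u
    have : a u - b u = ⟪q - q', k u⟫ := by
      simp [ha, hb, inner_sub_left]
    rw [this]
    calc |⟪q - q', k u⟫| ≤ ‖q - q'‖ * ‖k u‖ := abs_real_inner_le_norm _ _
      _ ≤ ‖q - q'‖ * C := by
          exact mul_le_mul_of_nonneg_left (hC u) (norm_nonneg _)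
      _ = C * r := by rw [hr]; ring
  -- key per-u bound
  have key : ∀ u : V,
      |Real.exp (a u) / A - Real.exp (b u) / B| ≤
        C * r * (Real.exp (a u) / A + Real.exp (b u) / B) := by
    intro u
    have hnum : Real.exp (a u) * B - Real.exp (b u) * A =
        ∑ w : V, (Real.exp (a u + b w) - Real.exp (b u + a w)) := by
      rw [Finset.sum_sub_distrib, hA, hB, Finset.mul_sum, Finset.mul_sum]
      simp [Real.exp_add]
    have hnumbound : |Real.exp (a u) * B - Real.exp (b u) * A| ≤
        C * r * (Real.exp (a u) * B + Real.exp (b u) * A) := by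
      rw [hnum]
      calc |∑ w : V, (Real.exp (a u + b w) - Real.exp (b u + a w))|
          ≤ ∑ w : V, |Real.exp (a u + b w) - Real.exp (b u + a w)| :=
            Finset.abs_sum_le_sum_abs _ _
        _ ≤ ∑ w : V, C * r * (Real.exp (a u + b w) + Real.exp (b u + a w)) := by
            apply Finset.sum_le_sum
            intro w _
            have h1 := abs_exp_sub_exp_le (a u + b w) (b u + a w)
            have h2 : |(a u + b w) - (b u + a w)| ≤ 2 * (C * r) := by
              have : (a u + b w) - (b u + a w) = (a u - b u) - (a w - b w) := by ring
              rw [this]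
              calc |(a u - b u) - (a w - b w)| ≤ |a u - b u| + |a w - b w| :=
                    abs_sub _ _
                _ ≤ C * r + C * r := add_le_add (hdiff u) (hdiff w)
                _ = 2 * (C * r) := by ring
            have hpos : 0 ≤ (Real.exp (a u + b w) + Real.exp (b u + a w)) / 2 :=
              by positivity
            calc |Real.exp (a u + b w) - Real.exp (b u + a w)|
                ≤ (Real.exp (a u + b w) + Real.exp (b u + a w)) / 2 *
                    |(a u + b w) - (b u + a w)| := h1
              _ ≤ (Real.exp (a u + b w) + Real.exp (b u + a w)) / 2 * (2 * (C * r)) :=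
                  mul_le_mul_of_nonneg_left h2 hpos
              _ = C * r * (Real.exp (a u + b w) + Real.exp (b u + a w)) := by ring
        _ = C * r * (Real.exp (a u) * B + Real.exp (b u) * A) := by
            rw [← Finset.mul_sum, Finset.sum_add_distrib, hA, hB, Finset.mul_sum,
              Finset.mul_sum]
            simp [Real.exp_add]
    have hABpos : 0 < A * B := mul_pos hApos hBpos
    rw [div_sub_div _ _ hApos.ne' hBpos.ne', abs_div, abs_of_pos hABpos]
    rw [div_le_iff₀ hABpos]
    calc |Real.exp (a u) * B - A * Real.exp (b u)|
        = |Real.exp (a u) * B - Real.exp (b u) * A| := by ring_nf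
      _
        ≤ C * r * (Real.exp (a u) * B + Real.exp (b u) * A) := hnumbound
      _ = C * r * (Real.exp (a u) / A + Real.exp (b u) / B) * (A * B) := by
          field_simp
  calc ∑ u : V, |Real.exp (a u) / A - Real.exp (b u) / B|
      ≤ ∑ u : V, C * r * (Real.exp (a u) / A + Real.exp (b u) / B) :=
        Finset.sum_le_sum (fun u _ => key u)
    _ = C * r * (A / A + B / B) := by
        rw [← Finset.mul_sum, Finset.sum_add_distrib, ← Finset.sum_div, ← Finset.sum_div]
    _ = 2 * C * r := by
        rw [div_self hApos.ne', div_self hBpos.ne']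
        ring
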